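/- Let ABC be a nondegenerate triangle in the Euclidean plane with circumcenter O and circumradius R, and let P be a point with barycentric coordinates t₁:t₂:t₃, where t₁, t₂, t₃ are nonzero and t := t₁+t₂+t₃ ≠ 0. Then R² − OP² = (t₁t₂t₃/t²)·(a²/t₁ + b²/t₂ + c²/t₃). -/

import Mathlib

/-- In a nondegenerate triangle `ABC` with circumcenter `O` and circumradius `R`,
if `P` has barycentric coordinates `t₁ : t₂ : t₃` (all nonzero, with nonzero sum `t`), then
`R² − OP² = (t₁t₂t₃/t²)·(a²/t₁ + b²/t₂ + c²/t₃)`. -/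
theorem stmt_2 (A B C O P : EuclideanSpace ℝ (Fin 2)) (a b c R t₁ t₂ t₃ : ℝ)
    (hABC : AffineIndependent ℝ ![A, B, C])
    (ha : a = dist B C) (hb : b = dist C A) (hc : c = dist A B)
    (hOA : dist O A = R) (hOB : dist O B = R) (hOC : dist O C = R)
    (ht₁ : t₁ ≠ 0) (ht₂ : t₂ ≠ 0) (ht₃ : t₃ ≠ 0)
    (ht : t₁ + t₂ + t₃ ≠ 0)
    (hP : ∀ M : EuclideanSpace ℝ (Fin 2),
      (t₁ + t₂ + t₃) • (P - M) = t₁ • (A - M) + t₂ • (B - M) + t₃ • (C - M)) :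
    R ^ 2 - dist O P ^ 2 =
      (t₁ * t₂ * t₃ / (t₁ + t₂ + t₃) ^ 2) * (a ^ 2 / t₁ + b ^ 2 / t₂ + c ^ 2 / t₃) := by
  have hP0 := hP O
  set u : EuclideanSpace ℝ (Fin 2) := A - O with hu
  set v : EuclideanSpace ℝ (Fin 2) := B - O with hv
  set w : EuclideanSpace ℝ (Fin 2) := C - O with hw
  have hnu : ‖u‖ ^ 2 = R ^ 2 := by rw [hu, ← dist_eq_norm, dist_comm, hOA]
  have hnv : ‖v‖ ^ 2 = R ^ 2 := by rw [hv, ← dist_eq_norm, dist_comm, hOB]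
  have hnw : ‖w‖ ^ 2 = R ^ 2 := by rw [hw, ← dist_eq_norm, dist_comm, hOC]
  have huv : inner ℝ u v = R ^ 2 - c ^ 2 / 2 := by
    have h : ‖u - v‖ ^ 2 = ‖u‖ ^ 2 - 2 * inner ℝ u v + ‖v‖ ^ 2 := norm_sub_sq_real u v
    have h2 : u - v = A - B := by rw [hu, hv]; abel
    rw [h2, ← dist_eq_norm, ← hc] at h
    rw [hnu, hnv] at h
    linarith
  have hvw : inner ℝ v w = R ^ 2 - a ^ 2 / 2 := by
    have h : ‖v - w‖ ^ 2 = ‖v‖ ^ 2 - 2 * inner ℝ v w + ‖w‖ ^ 2 := norm_sub_sq_real v w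
    have h2 : v - w = B - C := by rw [hv, hw]; abel
    rw [h2, ← dist_eq_norm, ← ha] at h
    rw [hnv, hnw] at h
    linarith
  have huw : inner ℝ u w = R ^ 2 - b ^ 2 / 2 := by
    have h : ‖w - u‖ ^ 2 = ‖w‖ ^ 2 - 2 * inner ℝ w u + ‖u‖ ^ 2 := norm_sub_sq_real w u
    have h2 : w - u = C - A := by rw [hw, hu]; abel
    rw [h2, ← dist_eq_norm, ← hb] at h
    rw [hnw, hnu] at h
    rw [real_inner_comm]
    linarith
  have key : (t₁ + t₂ + t₃) ^ 2 * dist O P ^ 2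
      = ‖t₁ • u + t₂ • v + t₃ • w‖ ^ 2 := by
    rw [← hP0, norm_smul, mul_pow, Real.norm_eq_abs, sq_abs, dist_comm, dist_eq_norm]
  have expand : ‖t₁ • u + t₂ • v + t₃ • w‖ ^ 2
      = t₁ ^ 2 * ‖u‖ ^ 2 + t₂ ^ 2 * ‖v‖ ^ 2 + t₃ ^ 2 * ‖w‖ ^ 2
        + 2 * t₁ * t₂ * inner ℝ u v + 2 * t₂ * t₃ * inner ℝ v w
        + 2 * t₁ * t₃ * inner ℝ u w := by
    rw [← real_inner_self_eq_norm_sq, ← real_inner_self_eq_norm_sq,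
      ← real_inner_self_eq_norm_sq, ← real_inner_self_eq_norm_sq]
    simp only [inner_add_left, inner_add_right, real_inner_smul_left,
      real_inner_smul_right]
    rw [real_inner_comm v u, real_inner_comm w v, real_inner_comm w u]
    ring
  rw [expand, hnu, hnv, hnw, huv, hvw, huw] at key
  have hOP : dist O P ^ 2 = (t₁ ^ 2 * R ^ 2 + t₂ ^ 2 * R ^ 2 + t₃ ^ 2 * R ^ 2
      + 2 * t₁ * t₂ * (R ^ 2 - c ^ 2 / 2) + 2 * t₂ * t₃ * (R ^ 2 - a ^ 2 / 2)
      + 2 * t₁ * t₃ * (R ^ 2 - b ^ 2 / 2)) / (t₁ + t₂ + t₃) ^ 2 := by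
    field_simp
    linarith [key]
  rw [hOP]
  field_simp
  ring
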